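/- For unitaries U : H₁ → H₂ and V : H₂ → H₃, the link product of the Choi operators of the corresponding unitary channels equals the Choi operator of the composed channel: |U⟩⟩⟨⟨U| * |V⟩⟩⟨⟨V| = |VU⟩⟩⟨⟨VU|, where the link (partial transpose and trace) is taken over H₂. -/
import Mathlib


open Matrix

/-- The Choi operator `|U⟩⟩⟨⟨U|` of a unitary channel `ρ ↦ U ρ U†`,
as a matrix on `H_out ⊗ H_in`. -/
def choiUnitary {n : ℕ} (U : Matrix (Fin n) (Fin n) ℂ) :
    Matrix (Fin n × Fin n) (Fin n × Fin n) ℂ :=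
  fun p q => U p.1 p.2 * star (U q.1 q.2)

/-- The link product over the shared space `H₂`:
`A * B = Tr_{H₂}[(A ⊗ I₃)(I₁ ⊗ B^{T₂})]`, where `A` acts on `H₂ ⊗ H₁`, `B` acts on
`H₃ ⊗ H₂`, and the result acts on `H₃ ⊗ H₁`; written entrywise after carrying out the
partial transpose on `H₂` and the partial trace over `H₂`. -/
noncomputable def linkOverH2 {n : ℕ}
    (A : Matrix (Fin n × Fin n) (Fin n × Fin n) ℂ)
    (B : Matrix (Fin n × Fin n) (Fin n × Fin n) ℂ) :
    Matrix (Fin n × Fin n) (Fin n × Fin n) ℂ :=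
  fun p q => ∑ b : Fin n, ∑ b' : Fin n, A (b, p.2) (b', q.2) * B (p.1, b) (q.1, b')

/-- `|U⟩⟩⟨⟨U| * |V⟩⟩⟨⟨V| = |VU⟩⟩⟨⟨VU|`, the link being taken over `H₂`. -/
theorem link_choi_unitaries {n : ℕ} (U V : Matrix (Fin n) (Fin n) ℂ)
    (hU : U ∈ Matrix.unitaryGroup (Fin n) ℂ) (hV : V ∈ Matrix.unitaryGroup (Fin n) ℂ) :
    linkOverH2 (choiUnitary U) (choiUnitary V) = choiUnitary (V * U) := by
  funext p q
  simp only [linkOverH2, choiUnitary, Matrix.mul_apply, Finset.sum_mul, Finset.mul_sum,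
    star_sum, star_mul']
  rw [Finset.sum_comm]
  apply Finset.sum_congr rfl; intro b _
  apply Finset.sum_congr rfl; intro b' _
  ring
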